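/- Splitting into early and tail terms: let x : [-r,T] → ℝ^d be (1-α)-Hölder continuous with constant K in the sense that |x(t)-x(s)| ≤ K(t-s)^{1-α} for all -r ≤ s ≤ t ≤ T, and also |x(t)-x(t-r)| ≤ K r^{1-α} for all t ∈ [r,T]. Then for every t ∈ (r,T], ∫₀ᵗ |x(t)-x(t-r)-x(s)+x(s-r)| (t-s)^{-α-1} ds ≤ (2/α + 2/(1-2α)) K r^{1-2α}, provided 0 < α < 1/2. -/

import Mathlib

open Real MeasureTheory intervalIntegral

/-- Splitting into early and tail terms for the delayed increment integral. -/
theorem stmt_13 (d : ℕ) (α r T K : ℝ) (hα : 0 < α) (hα2 : α < 1/2)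
    (hr : 0 < r) (hT : r < T) (hK : 0 < K)
    (x : ℝ → EuclideanSpace ℝ (Fin d))
    (hHold : ∀ s ∈ Set.Icc (-r) T, ∀ t ∈ Set.Icc (-r) T, s ≤ t →
      ‖x t - x s‖ ≤ K * (t - s) ^ (1 - α))
    (hdelay : ∀ t ∈ Set.Icc r T, ‖x t - x (t - r)‖ ≤ K * r ^ (1 - α)) :
    ∀ t ∈ Set.Ioc r T,
      (∫ s in (0:ℝ)..t, ‖x t - x (t - r) - x s + x (s - r)‖ * (t - s) ^ (-α - 1)) ≤
        (2/α + 2/(1 - 2*α)) * K * r ^ (1 - 2*α) := by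
  have h1α : (0:ℝ) < 1 - α := by linarith
  have h12α : (0:ℝ) < 1 - 2*α := by linarith
  -- distance version of Hölder bound
  have hd : ∀ a ∈ Set.Icc (-r) T, ∀ b ∈ Set.Icc (-r) T,
      dist (x a) (x b) ≤ K * |b - a| ^ (1 - α) := by
    intro a ha b hb
    rcases le_total a b with h | h
    · rw [abs_of_nonneg (sub_nonneg.2 h), dist_comm, dist_eq_norm]
      exact hHold a ha b hb h
    · rw [abs_sub_comm, abs_of_nonneg (sub_nonneg.2 h), dist_eq_norm]
      exact hHold b hb a ha h
  -- continuity of x on [-r, T]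
  have hcx : ContinuousOn x (Set.Icc (-r) T) := by
    have hH : HolderOnWith K.toNNReal ⟨1 - α, h1α.le⟩ x (Set.Icc (-r) T) := by
      intro a ha b hb
      rw [edist_dist, edist_dist]
      calc ENNReal.ofReal (dist (x a) (x b))
          ≤ ENNReal.ofReal (K * dist a b ^ (1 - α)) := by
            refine ENNReal.ofReal_le_ofReal ?_
            rw [Real.dist_eq (x := a), abs_sub_comm]
            exact hd a ha b hb
        _ = _ := by
            rw [ENNReal.ofReal_mul hK.le,
              ← ENNReal.ofReal_rpow_of_nonneg dist_nonneg h1α.le]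
            rfl
    exact hH.continuousOn (by exact_mod_cast h1α)
  intro t ht
  obtain ⟨hrt, htT⟩ := ht
  have h0t : (0:ℝ) < t := hr.trans hrt
  have hsub1 : Set.Icc (0:ℝ) t ⊆ Set.Icc (-r) T :=
    Set.Icc_subset_Icc (by linarith) htT
  have hxc : ContinuousOn (fun s => x s) (Set.Icc 0 t) := hcx.mono hsub1
  have hxrc : ContinuousOn (fun s => x (s - r)) (Set.Icc 0 t) := by
    apply hcx.comp (continuous_id.sub continuous_const).continuousOn
    intro s hs
    exact ⟨by simp; linarith [hs.1], by simp; linarith [hs.2]⟩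
  have hN : ContinuousOn (fun s => ‖x t - x (t - r) - x s + x (s - r)‖)
      (Set.Icc 0 t) := ((continuousOn_const.sub hxc).add hxrc).norm
  -- increment bound
  have hinc : ∀ s ∈ Set.Icc (0:ℝ) t, ‖x s - x (s - r)‖ ≤ K * r ^ (1 - α) := by
    intro s hs
    have := hHold (s - r) ⟨by linarith [hs.1], by linarith [hs.2]⟩ s
      ⟨by linarith [hs.1], by linarith [hs.2]⟩ (by linarith)
    simpa using this
  -- early bound
  have hb1 : ∀ s ∈ Set.Icc (0:ℝ) t,
      ‖x t - x (t - r) - x s + x (s - r)‖ ≤ 2 * (K * r ^ (1 - α)) := by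
    intro s hs
    have h1 := hinc t ⟨h0t.le, le_refl t⟩
    have h2 := hinc s hs
    have heq : x t - x (t - r) - x s + x (s - r)
        = (x t - x (t - r)) - (x s - x (s - r)) := by abel
    rw [heq]
    calc ‖(x t - x (t - r)) - (x s - x (s - r))‖
        ≤ ‖x t - x (t - r)‖ + ‖x s - x (s - r)‖ := norm_sub_le _ _
      _ ≤ 2 * (K * r ^ (1 - α)) := by linarith
  -- tail bound
  have hb2 : ∀ s ∈ Set.Icc (0:ℝ) t,
      ‖x t - x (t - r) - x s + x (s - r)‖ ≤ 2 * K * (t - s) ^ (1 - α) := by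
    intro s hs
    have h1 : ‖x t - x s‖ ≤ K * (t - s) ^ (1 - α) :=
      hHold s (hsub1 hs) t ⟨by linarith, htT⟩ hs.2
    have h2 : ‖x (t - r) - x (s - r)‖ ≤ K * (t - s) ^ (1 - α) := by
      have := hHold (s - r) ⟨by linarith [hs.1], by linarith [hs.2]⟩ (t - r)
        ⟨by linarith, by linarith⟩ (by linarith [hs.2])
      have he : t - r - (s - r) = t - s := by ring
      rwa [he] at this
    have heq : x t - x (t - r) - x s + x (s - r)
        = (x t - x s) - (x (t - r) - x (s - r)) := by abel
    rw [heq]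
    calc ‖(x t - x s) - (x (t - r) - x (s - r))‖
        ≤ ‖x t - x s‖ + ‖x (t - r) - x (s - r)‖ := norm_sub_le _ _
      _ ≤ 2 * K * (t - s) ^ (1 - α) := by linarith
  set f : ℝ → ℝ := fun s => ‖x t - x (t - r) - x s + x (s - r)‖ * (t - s) ^ (-α - 1)
    with hf_def
  -- continuity of rpow factor away from t
  have hrpowc : ContinuousOn (fun s => (t - s) ^ (-α - 1)) (Set.Icc 0 (t - r)) := by
    apply ContinuousOn.rpow_const (continuous_const.sub continuous_id).continuousOn
    intro s hs
    left
    have := hs.2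
    intro h
    have : t - s = 0 := h
    linarith
  have hIcc_sub : Set.Icc (0:ℝ) (t - r) ⊆ Set.Icc 0 t :=
    Set.Icc_subset_Icc le_rfl (by linarith)
  have htr0 : (0:ℝ) ≤ t - r := by linarith
  have hf1 : IntervalIntegrable f volume 0 (t - r) :=
    (ContinuousOn.mul (hN.mono hIcc_sub) hrpowc).intervalIntegrable_of_Icc htr0
  -- g1 and its integral
  set g1 : ℝ → ℝ := fun s => 2 * (K * r ^ (1 - α)) * (t - s) ^ (-α - 1) with hg1_def
  have hg1 : IntervalIntegrable g1 volume 0 (t - r) :=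
    (continuousOn_const.mul hrpowc).intervalIntegrable_of_Icc htr0
  have hle1 : ∀ s ∈ Set.Icc (0:ℝ) (t - r), f s ≤ g1 s := by
    intro s hs
    have hnn : (0:ℝ) ≤ (t - s) ^ (-α - 1) :=
      Real.rpow_nonneg (by linarith [hs.2]) _
    exact mul_le_mul_of_nonneg_right (hb1 s (hIcc_sub hs)) hnn
  -- tail integrability
  set g2 : ℝ → ℝ := fun s => 2 * K * (t - s) ^ (-(2*α)) with hg2_def
  have hg2base : IntervalIntegrable (fun s => (t - s) ^ (-(2*α))) volume (t - r) t := by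
    have h := (intervalIntegrable_rpow' (by linarith : (-1:ℝ) < -(2*α))
      (a := r) (b := 0)).comp_sub_left t
    simpa using h
  have hg2 : IntervalIntegrable g2 volume (t - r) t := hg2base.const_mul _
  have hle2 : ∀ s ∈ Set.Icc (t - r) t, f s ≤ g2 s := by
    intro s hs
    rcases eq_or_lt_of_le hs.2 with hst | hst
    · simp only [hf_def, hg2_def, hst, sub_self]
      rw [Real.zero_rpow (by intro h; linarith : -α - 1 ≠ 0),
        Real.zero_rpow (by intro h; linarith : -(2*α) ≠ 0)]
      simp
    · have hts : (0:ℝ) < t - s := by linarith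
      have hnn : (0:ℝ) ≤ (t - s) ^ (-α - 1) := Real.rpow_nonneg hts.le _
      have h1 : f s ≤ 2 * K * (t - s) ^ (1 - α) * (t - s) ^ (-α - 1) :=
        mul_le_mul_of_nonneg_right
          (hb2 s ⟨by linarith [hs.1], hs.2⟩) hnn
      calc f s ≤ 2 * K * (t - s) ^ (1 - α) * (t - s) ^ (-α - 1) := h1
        _ = g2 s := by
            rw [hg2_def, mul_assoc, ← Real.rpow_add hts]
            ring_nf
  have hf2 : IntervalIntegrable f volume (t - r) t := by
    apply hg2.mono_fun
    · apply AEStronglyMeasurable.mul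
      · exact ((hN.mono (by
          rw [Set.uIoc_of_le (by linarith : t - r ≤ t)]
          exact fun s hs => ⟨by linarith [hs.1], hs.2⟩)).aestronglyMeasurable
          (by rw [Set.uIoc_of_le (by linarith : t - r ≤ t)]; exact measurableSet_Ioc))
      · exact (by fun_prop : Measurable fun s : ℝ => (t - s) ^ (-α - 1)).aestronglyMeasurable
    · rw [Filter.EventuallyLE, ae_restrict_iff' (by rw [Set.uIoc_of_le (by linarith : t - r ≤ t)]; exact measurableSet_Ioc)]
      refine Filter.Eventually.of_forall fun s hs => ?_
      rw [Set.uIoc_of_le (by linarith : t - r ≤ t)] at hs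
      have hfnn : 0 ≤ f s :=
        mul_nonneg (norm_nonneg _) (Real.rpow_nonneg (by linarith [hs.2]) _)
      have hgnn : 0 ≤ g2 s :=
        mul_nonneg (by linarith) (Real.rpow_nonneg (by linarith [hs.2]) _)
      rw [Real.norm_of_nonneg hfnn, Real.norm_of_nonneg hgnn]
      exact hle2 s ⟨hs.1.le, hs.2⟩
  -- split the integral
  have hsplit : (∫ s in (0:ℝ)..t, f s)
      = (∫ s in (0:ℝ)..(t - r), f s) + ∫ s in (t - r)..t, f s :=
    (integral_add_adjacent_intervals hf1 hf2).symm
  -- bound piece 1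
  have hI1 : (∫ s in (0:ℝ)..(t - r), f s) ≤ 2 / α * K * r ^ (1 - 2*α) := by
    have hmono := integral_mono_on htr0 hf1 hg1 hle1
    have hcomp : (∫ s in (0:ℝ)..(t - r), (t - s) ^ (-α - 1))
        = ∫ u in r..t, u ^ (-α - 1) := by
      have := intervalIntegral.integral_comp_sub_left
        (fun u : ℝ => u ^ (-α - 1)) t (a := 0) (b := t - r)
      simpa using this
    have hval : (∫ u in r..t, u ^ (-α - 1))
        = (t ^ (-α) - r ^ (-α)) / (-α) := by
      rw [integral_rpow (Or.inr ⟨by intro h; linarith, by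
        rw [Set.uIcc_of_le hrt.le]; intro h; exact absurd h.1 (by linarith)⟩)]
      norm_num
    have hg1val : (∫ s in (0:ℝ)..(t - r), g1 s)
        = 2 * (K * r ^ (1 - α)) * ((t ^ (-α) - r ^ (-α)) / (-α)) := by
      rw [hg1_def]
      rw [intervalIntegral.integral_const_mul, hcomp, hval]
    have htnn : (0:ℝ) ≤ t ^ (-α) := Real.rpow_nonneg h0t.le _
    have hrpos : (0:ℝ) < r ^ (1 - α) := Real.rpow_pos_of_pos hr _
    have hkey : r ^ (1 - α) * r ^ (-α) = r ^ (1 - 2*α) := by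
      rw [← Real.rpow_add hr]; ring_nf
    calc (∫ s in (0:ℝ)..(t - r), f s) ≤ ∫ s in (0:ℝ)..(t - r), g1 s := hmono
      _ = 2 * (K * r ^ (1 - α)) * ((t ^ (-α) - r ^ (-α)) / (-α)) := hg1val
      _ = 2 * K * (r ^ (1 - α) * r ^ (-α)) / α
            - 2 * K * (r ^ (1 - α) * t ^ (-α)) / α := by
          rw [div_neg, mul_neg, ← mul_div_assoc, ← neg_div, ← sub_div]
          congr 1
          ring
      _ ≤ 2 / α * K * r ^ (1 - 2*α) := by
          rw [hkey]
          have h1 : 0 ≤ 2 * K * (r ^ (1 - α) * t ^ (-α)) / α := by positivity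
          have h2 : 2 / α * K * r ^ (1 - 2*α) = 2 * K * r ^ (1 - 2*α) / α := by
            ring
          linarith
  -- bound piece 2
  have hI2 : (∫ s in (t - r)..t, f s) ≤ 2 / (1 - 2*α) * K * r ^ (1 - 2*α) := by
    have hmono := integral_mono_on (by linarith : t - r ≤ t) hf2 hg2 hle2
    have hcomp : (∫ s in (t - r)..t, (t - s) ^ (-(2*α)))
        = ∫ u in (0:ℝ)..r, u ^ (-(2*α)) := by
      have := intervalIntegral.integral_comp_sub_left
        (fun u : ℝ => u ^ (-(2*α))) t (a := t - r) (b := t)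
      simpa using this
    have hval : (∫ u in (0:ℝ)..r, u ^ (-(2*α))) = r ^ (1 - 2*α) / (1 - 2*α) := by
      rw [integral_rpow (Or.inl (by linarith)),
        show -(2*α) + 1 = 1 - 2*α by ring, Real.zero_rpow h12α.ne']
      ring
    have hg2val : (∫ s in (t - r)..t, g2 s) = 2 * K * (r ^ (1 - 2*α) / (1 - 2*α)) := by
      rw [hg2_def, intervalIntegral.integral_const_mul, hcomp, hval]
    calc (∫ s in (t - r)..t, f s) ≤ ∫ s in (t - r)..t, g2 s := hmono
      _ = 2 * K * (r ^ (1 - 2*α) / (1 - 2*α)) := hg2val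
      _ = 2 / (1 - 2*α) * K * r ^ (1 - 2*α) := by ring
  calc (∫ s in (0:ℝ)..t, f s)
      = (∫ s in (0:ℝ)..(t - r), f s) + ∫ s in (t - r)..t, f s := hsplit
    _ ≤ 2 / α * K * r ^ (1 - 2*α) + 2 / (1 - 2*α) * K * r ^ (1 - 2*α) :=
        add_le_add hI1 hI2
    _ = (2/α + 2/(1 - 2*α)) * K * r ^ (1 - 2*α) := by ring
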